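/- Fix t1 with s_max ≤ t1 < e_min and p > t1 - s_min. Then f(t2) = MI(t1,t2,a) has exactly one positive inflection point, at t2 = e_min. -/

import Mathlib

open Set Filter

/-- Minimum intersection of an activity (sMin, sMax, p) with interval [t1,t2]. -/
noncomputable def MI (sMin sMax p t1 t2 : ℝ) : ℝ :=
  max 0 (min (min p (t2 - t1)) (min (sMin + p - t1) (t2 - sMax)))

/-- Left derivative. -/
noncomputable def leftD (f : ℝ → ℝ) (x : ℝ) : ℝ := derivWithin f (Set.Iio x) x

/-- Right derivative. -/
noncomputable def rightD (f : ℝ → ℝ) (x : ℝ) : ℝ := derivWithin f (Set.Ioi x) x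

theorem mi_unique_inflection_case4 (sMin sMax p t1 : ℝ)
    (hs : sMin ≤ sMax) (hp : 0 ≤ p)
    (h1 : sMax ≤ t1) (h2 : t1 < sMin + p) (h3 : p > t1 - sMin) :
    ∀ x : ℝ,
      leftD (fun t2 => MI sMin sMax p t1 t2) x >
        rightD (fun t2 => MI sMin sMax p t1 t2) x ↔ x = sMin + p := by
  have hsMin : sMin ≤ t1 := le_trans hs h1
  set e := sMin + p with he
  have hte : t1 < e := h2
  set g : ℝ → ℝ := fun t2 => max 0 (min (t2 - t1) (e - t1)) with hg
  have hfe : (fun t2 => MI sMin sMax p t1 t2) = g := by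
    funext t2
    unfold MI
    simp only [hg]
    congr 1
    apply le_antisymm
    · exact le_min (le_trans (min_le_left _ _) (min_le_right _ _))
        (le_trans (min_le_right _ _) (min_le_left _ _))
    · refine le_min (le_min ?_ (min_le_left _ _)) (le_min (min_le_right _ _) ?_)
      · calc min (t2 - t1) (e - t1) ≤ e - t1 := min_le_right _ _
          _ ≤ p := by simp only [he]; linarith
      · calc min (t2 - t1) (e - t1) ≤ t2 - t1 := min_le_left _ _
          _ ≤ t2 - sMax := by linarith
  rw [hfe]
  have hgl : ∀ t2, t2 ≤ t1 → g t2 = 0 := fun t2 h => by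
    simp only [hg]
    exact max_eq_left (le_trans (min_le_left _ _) (by linarith))
  have hgm : ∀ t2, t1 ≤ t2 → t2 ≤ e → g t2 = t2 - t1 := fun t2 ha hb => by
    simp only [hg]
    rw [min_eq_left (by linarith), max_eq_right (by linarith)]
  have hgr : ∀ t2, e ≤ t2 → g t2 = e - t1 := fun t2 h => by
    simp only [hg]
    rw [min_eq_right (by linarith), max_eq_right (by linarith)]
  intro x
  unfold leftD rightD
  rcases lt_trichotomy x t1 with hx | hx | hx
  · -- x < t1 : g = 0 near x on both sides
    have hmem : Iio t1 ∈ nhds x := Iio_mem_nhds hx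
    have hL : derivWithin g (Iio x) x = 0 := by
      rw [Filter.EventuallyEq.derivWithin_eq
        (Filter.eventuallyEq_of_mem (mem_nhdsWithin_of_mem_nhds hmem)
          (fun y hy => hgl y (le_of_lt hy))) (hgl x (le_of_lt hx))]
      exact congrFun (derivWithin_const _ (0:ℝ)) x
    have hR : derivWithin g (Ioi x) x = 0 := by
      rw [Filter.EventuallyEq.derivWithin_eq
        (Filter.eventuallyEq_of_mem (mem_nhdsWithin_of_mem_nhds hmem)
          (fun y hy => hgl y (le_of_lt hy))) (hgl x (le_of_lt hx))]
      exact congrFun (derivWithin_const _ (0:ℝ)) x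
    rw [hL, hR]
    constructor
    · intro h; exact absurd h (lt_irrefl 0)
    · intro h; exfalso; linarith
  · -- x = t1 : left deriv 0, right deriv 1
    have heq1 : g =ᶠ[nhdsWithin x (Iio x)] (fun _ => (0:ℝ)) :=
      Filter.eventuallyEq_of_mem self_mem_nhdsWithin (fun y hy => hgl y (le_of_lt (hx ▸ hy)))
    have hL : derivWithin g (Iio x) x = 0 := by
      rw [Filter.EventuallyEq.derivWithin_eq heq1 (hgl x (le_of_eq hx))]
      exact congrFun (derivWithin_const _ (0:ℝ)) x
    have heq2 : g =ᶠ[nhdsWithin x (Ioi x)] (fun y => y - t1) := by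
      have hmem : Ioi x ∩ Iio e ∈ nhdsWithin x (Ioi x) :=
        Filter.inter_mem self_mem_nhdsWithin
          (mem_nhdsWithin_of_mem_nhds (Iio_mem_nhds (hx ▸ hte)))
      exact Filter.eventuallyEq_of_mem hmem
        (fun y hy => hgm y (le_of_lt (hx ▸ hy.1)) (le_of_lt hy.2))
    have hR : derivWithin g (Ioi x) x = 1 := by
      rw [Filter.EventuallyEq.derivWithin_eq heq2 (by rw [hgm x hx.ge (hx ▸ hte.le)])]
      exact ((hasDerivWithinAt_id x _).sub_const t1).derivWithin (uniqueDiffWithinAt_Ioi x)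
    rw [hL, hR]
    constructor
    · intro h; exfalso; linarith
    · intro h; exfalso; rw [hx] at h; linarith
  · rcases lt_trichotomy x e with hx2 | hx2 | hx2
    · -- t1 < x < e : derivs both 1
      have hmem : Ioi t1 ∩ Iio e ∈ nhds x := by
        exact Filter.inter_mem (Ioi_mem_nhds hx) (Iio_mem_nhds hx2)
      have key : ∀ s : Set ℝ, UniqueDiffWithinAt ℝ s x →
          derivWithin g s x = 1 := fun s hu => by
        rw [Filter.EventuallyEq.derivWithin_eq
          (Filter.eventuallyEq_of_mem (mem_nhdsWithin_of_mem_nhds hmem)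
            (fun y hy => hgm y (le_of_lt hy.1) (le_of_lt hy.2)))
          (by rw [hgm x (le_of_lt hx) (le_of_lt hx2)])]
        exact ((hasDerivWithinAt_id x _).sub_const t1).derivWithin hu
      rw [key _ (uniqueDiffWithinAt_Iio x), key _ (uniqueDiffWithinAt_Ioi x)]
      constructor
      · intro h; exact absurd h (lt_irrefl 1)
      · intro h; exfalso; linarith
    · -- x = e : left deriv 1, right deriv 0
      have heq1 : g =ᶠ[nhdsWithin x (Iio x)] (fun y => y - t1) := by
        have hmem : Iio x ∩ Ioi t1 ∈ nhdsWithin x (Iio x) :=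
          Filter.inter_mem self_mem_nhdsWithin (mem_nhdsWithin_of_mem_nhds (Ioi_mem_nhds hx))
        exact Filter.eventuallyEq_of_mem hmem
          (fun y hy => hgm y (le_of_lt hy.2) (le_of_lt (hx2 ▸ hy.1)))
      have hL : derivWithin g (Iio x) x = 1 := by
        rw [Filter.EventuallyEq.derivWithin_eq heq1 (by rw [hgm x hx.le hx2.le])]
        exact ((hasDerivWithinAt_id x _).sub_const t1).derivWithin (uniqueDiffWithinAt_Iio x)
      have heq2 : g =ᶠ[nhdsWithin x (Ioi x)] (fun _ => e - t1) :=
        Filter.eventuallyEq_of_mem self_mem_nhdsWithin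
          (fun y hy => hgr y (le_of_lt (hx2 ▸ hy)))
      have hR : derivWithin g (Ioi x) x = 0 := by
        rw [Filter.EventuallyEq.derivWithin_eq heq2 (hgr x hx2.ge)]
        exact congrFun (derivWithin_const _ (e - t1)) x
      rw [hL, hR]
      simp [hx2]
    · -- x > e : derivs both 0
      have hmem : Ioi e ∈ nhds x := Ioi_mem_nhds hx2
      have key : ∀ s : Set ℝ, UniqueDiffWithinAt ℝ s x →
          derivWithin g s x = 0 := fun s hu => by
        rw [Filter.EventuallyEq.derivWithin_eq
          (Filter.eventuallyEq_of_mem (mem_nhdsWithin_of_mem_nhds hmem)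
            (fun y hy => hgr y (le_of_lt hy))) (hgr x (le_of_lt hx2))]
        exact congrFun (derivWithin_const _ (e - t1)) x
      rw [key _ (uniqueDiffWithinAt_Iio x), key _ (uniqueDiffWithinAt_Ioi x)]
      constructor
      · intro h; exact absurd h (lt_irrefl 0)
      · intro h; exfalso; linarith
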